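/- With χ²_{I_1} and χ²_{I_2} independent chi-square variables and thresholds r_1², r_2² > 0, for every u ∈ [0, 1/2): P[χ²_{I_1} ≤ r_1² and χ²_{I_1} + χ²_{I_2} > r_2²] ≤ e^{-u r_2²} (1-2u)^{-(I_1+I_2)/2} · P[χ²_{I_1} ≤ (1-2u) r_1²]. -/

import Mathlib

open MeasureTheory ProbabilityTheory

/-- The chi-square distribution with `k` degrees of freedom, as the Gamma
distribution with shape `k/2` and rate `1/2`. -/
noncomputable def chiSquareMeasure (k : ℕ) : Measure ℝ :=
  gammaMeasure ((k : ℝ) / 2) (1 / 2)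

open Real Set

lemma gammaPDF_measurable (a r : ℝ) : Measurable (gammaPDF a r) :=
  (measurable_gammaPDFReal a r).ennreal_ofReal

/-- Real tilting identity. -/
lemma tilt_real {c : ℝ} (hc : 0 < c) (a u : ℝ) (hcu : c / 2 = 1 / 2 - u) (x : ℝ) :
    Real.exp (u * x) * gammaPDFReal a (1 / 2) x
      = c ^ (-a) * gammaPDFReal a (c / 2) x := by
  unfold gammaPDFReal
  by_cases hx : 0 ≤ x
  · rw [if_pos hx, if_pos hx]
    have e1 : c ^ (-a) * c ^ a = 1 := by
      rw [← Real.rpow_add hc]; simp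
    have e2 : Real.exp (u * x) * Real.exp (-(1 / 2 * x)) = Real.exp (-(c / 2 * x)) := by
      rw [← Real.exp_add]; congr 1
      have : c / 2 = 1 / 2 - u := hcu
      nlinarith [this]
    have e3 : (c / 2 : ℝ) ^ a = c ^ a * (1 / 2 : ℝ) ^ a := by
      rw [show (c / 2 : ℝ) = c * (1 / 2) by ring,
        Real.mul_rpow hc.le (by norm_num : (0:ℝ) ≤ 1 / 2)]
    calc Real.exp (u * x) * ((1 / 2 : ℝ) ^ a / Real.Gamma a * x ^ (a - 1) * Real.exp (-(1 / 2 * x)))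
        = (1 / 2 : ℝ) ^ a / Real.Gamma a * x ^ (a - 1)
            * (Real.exp (u * x) * Real.exp (-(1 / 2 * x))) := by ring
      _ = (1 / 2 : ℝ) ^ a / Real.Gamma a * x ^ (a - 1) * Real.exp (-(c / 2 * x)) := by rw [e2]
      _ = (c ^ (-a) * c ^ a)
            * ((1 / 2 : ℝ) ^ a / Real.Gamma a * x ^ (a - 1) * Real.exp (-(c / 2 * x))) := by
          rw [e1, one_mul]
      _ = c ^ (-a) * ((c / 2) ^ a / Real.Gamma a * x ^ (a - 1) * Real.exp (-(c / 2 * x))) := by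
          rw [e3]; ring
  · rw [if_neg hx, if_neg hx, mul_zero, mul_zero]

lemma tilt {c : ℝ} (hc : 0 < c) (a u : ℝ) (hu0 : 0 ≤ u) (hcu : c / 2 = 1 / 2 - u) (x : ℝ) :
    ENNReal.ofReal (Real.exp (u * x)) * gammaPDF a (1 / 2) x
      = ENNReal.ofReal (c ^ (-a)) * gammaPDF a (c / 2) x := by
  unfold gammaPDF
  rw [← ENNReal.ofReal_mul (Real.exp_nonneg _),
    ← ENNReal.ofReal_mul (Real.rpow_nonneg hc.le _), tilt_real hc a u hcu x]

/-- Real scaling identity. -/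
lemma scale_real {c : ℝ} (hc : 0 < c) (a x : ℝ) :
    gammaPDFReal a (c / 2) x = c * gammaPDFReal a (1 / 2) (c * x) := by
  unfold gammaPDFReal
  by_cases hx : 0 ≤ x
  · rw [if_pos hx, if_pos (mul_nonneg hc.le hx)]
    have e3 : (c / 2 : ℝ) ^ a = c ^ a * (1 / 2 : ℝ) ^ a := by
      rw [show (c / 2 : ℝ) = c * (1 / 2) by ring,
        Real.mul_rpow hc.le (by norm_num : (0:ℝ) ≤ 1 / 2)]
    have e4 : (c * x) ^ (a - 1) = c ^ (a - 1) * x ^ (a - 1) := Real.mul_rpow hc.le hx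
    have e5 : c * c ^ (a - 1) = c ^ a := by
      have h := Real.rpow_add hc 1 (a - 1)
      rw [Real.rpow_one] at h
      rw [← h]; norm_num
    have e6 : Real.exp (-(1 / 2 * (c * x))) = Real.exp (-(c / 2 * x)) := by congr 1; ring
    rw [e4, e6, e3, ← e5]
    ring
  · rw [if_neg hx, if_neg (by intro h; exact hx (nonneg_of_mul_nonneg_right h hc)), mul_zero]

lemma scale {c : ℝ} (hc : 0 < c) (a x : ℝ) :
    gammaPDF a (c / 2) x = ENNReal.ofReal c * gammaPDF a (1 / 2) (c * x) := by
  unfold gammaPDF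
  rw [← ENNReal.ofReal_mul hc.le, scale_real hc a x]

/-- Change of variables for the Iic lintegral of the scaled gamma pdf. -/
lemma Iic_scale {c : ℝ} (hc : 0 < c) (a t : ℝ) :
    ∫⁻ x in Iic t, gammaPDF a (c / 2) x = ∫⁻ y in Iic (c * t), gammaPDF a (1 / 2) y := by
  have hG : Measurable ((Iic (c * t)).indicator (gammaPDF a (1 / 2))) :=
    (gammaPDF_measurable a (1 / 2)).indicator measurableSet_Iic
  have hpt : ∀ x, (Iic t).indicator (gammaPDF a (c / 2)) x
      = ENNReal.ofReal c * (Iic (c * t)).indicator (gammaPDF a (1 / 2)) (c * x) := by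
    intro x
    by_cases hx : x ≤ t
    · rw [indicator_of_mem (mem_Iic.mpr hx), indicator_of_mem
        (mem_Iic.mpr (mul_le_mul_of_nonneg_left hx hc.le)), scale hc]
    · rw [indicator_of_notMem (fun h => hx (mem_Iic.mp h)), indicator_of_notMem
        (fun h => hx (le_of_mul_le_mul_left (mem_Iic.mp h) hc)), mul_zero]
  calc ∫⁻ x in Iic t, gammaPDF a (c / 2) x
      = ∫⁻ x, (Iic t).indicator (gammaPDF a (c / 2)) x :=
        (lintegral_indicator measurableSet_Iic _).symm
    _ = ∫⁻ x, ENNReal.ofReal c * (Iic (c * t)).indicator (gammaPDF a (1 / 2)) (c * x) :=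
        lintegral_congr hpt
    _ = ENNReal.ofReal c * ∫⁻ x, (Iic (c * t)).indicator (gammaPDF a (1 / 2)) (c * x) :=
        lintegral_const_mul' _ _ ENNReal.ofReal_ne_top
    _ = ENNReal.ofReal c * ∫⁻ y, (Iic (c * t)).indicator (gammaPDF a (1 / 2)) y
          ∂(Measure.map (fun x => c * x) volume) := by
        rw [lintegral_map hG (measurable_const_mul c)]
    _ = ENNReal.ofReal c * (ENNReal.ofReal |c⁻¹|
          * ∫⁻ y, (Iic (c * t)).indicator (gammaPDF a (1 / 2)) y) := by
        rw [Real.map_volume_mul_left hc.ne', lintegral_smul_measure, smul_eq_mul]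
    _ = ∫⁻ y, (Iic (c * t)).indicator (gammaPDF a (1 / 2)) y := by
        rw [abs_of_pos (inv_pos.mpr hc), ← mul_assoc, ← ENNReal.ofReal_mul hc.le,
          mul_inv_cancel₀ hc.ne', ENNReal.ofReal_one, one_mul]
    _ = ∫⁻ y in Iic (c * t), gammaPDF a (1 / 2) y :=
        lintegral_indicator measurableSet_Iic _

/-- Chernoff bound: for u ∈ [0,1/2),
P[χ²_{I₁} ≤ r₁² ∧ χ²_{I₁} + χ²_{I₂} > r₂²]
  ≤ e^{-u r₂²} (1-2u)^{-(I₁+I₂)/2} P[χ²_{I₁} ≤ (1-2u) r₁²]. -/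
theorem chiSquare_mixed_tail_chernoff
    {Ω : Type*} [MeasurableSpace Ω] (μ : Measure Ω) [IsProbabilityMeasure μ]
    (I₁ I₂ : ℕ) (hI₁ : 0 < I₁) (hI₂ : 0 < I₂)
    (X Y : Ω → ℝ) (hX : Measurable X) (hY : Measurable Y)
    (hXY : IndepFun X Y μ)
    (hXlaw : μ.map X = chiSquareMeasure I₁) (hYlaw : μ.map Y = chiSquareMeasure I₂)
    (r₁sq r₂sq : ℝ) (hr₁ : 0 < r₁sq) (hr₂ : 0 < r₂sq)
    (u : ℝ) (hu0 : 0 ≤ u) (hu : u < 1 / 2) :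
    (μ {ω | X ω ≤ r₁sq ∧ r₂sq < X ω + Y ω}).toReal
      ≤ Real.exp (-(u * r₂sq)) * (1 - 2 * u) ^ (-((I₁ + I₂ : ℝ)) / 2) *
        (μ {ω | X ω ≤ (1 - 2 * u) * r₁sq}).toReal := by
  set c : ℝ := 1 - 2 * u with hc_def
  have hc : 0 < c := by simp only [hc_def]; linarith
  have hcu : c / 2 = 1 / 2 - u := by simp only [hc_def]; ring
  set a₁ : ℝ := (I₁ : ℝ) / 2 with ha₁_def
  set a₂ : ℝ := (I₂ : ℝ) / 2 with ha₂_def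
  have ha₁ : 0 < a₁ := by positivity
  have ha₂ : 0 < a₂ := by positivity
  -- the two ENNReal-valued factors
  set F : ℝ → ENNReal := (Iic r₁sq).indicator (fun x => ENNReal.ofReal (Real.exp (u * x)))
    with hF_def
  set H : ℝ → ENNReal := fun y => ENNReal.ofReal (Real.exp (u * y)) with hH_def
  have hFmeas : Measurable F :=
    ((Real.measurable_exp.comp (measurable_const_mul u)).ennreal_ofReal).indicator
      measurableSet_Iic
  have hHmeas : Measurable H :=
    (Real.measurable_exp.comp (measurable_const_mul u)).ennreal_ofReal
  -- law of X applied to Iic sets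
  have hXset : ∀ t : ℝ, μ {ω | X ω ≤ t} = ∫⁻ x in Iic t, gammaPDF a₁ (1 / 2) x := by
    intro t
    have : {ω | X ω ≤ t} = X ⁻¹' (Iic t) := rfl
    rw [this, ← Measure.map_apply hX measurableSet_Iic, hXlaw]
    simp only [chiSquareMeasure, gammaMeasure]
    rw [withDensity_apply _ measurableSet_Iic]
  -- value of ∫⁻ H ∘ Y
  have hHint : ∫⁻ ω, H (Y ω) ∂μ = ENNReal.ofReal (c ^ (-a₂)) := by
    rw [← lintegral_map hHmeas hY, hYlaw]
    simp only [chiSquareMeasure, gammaMeasure]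
    rw [lintegral_withDensity_eq_lintegral_mul volume (gammaPDF_measurable _ _) hHmeas]
    have : ∀ y, (gammaPDF a₂ (1 / 2) * H) y
        = ENNReal.ofReal (c ^ (-a₂)) * gammaPDF a₂ (c / 2) y := by
      intro y
      simp only [Pi.mul_apply, hH_def]
      rw [mul_comm, tilt hc a₂ u hu0 hcu y]
    rw [lintegral_congr this, lintegral_const_mul' _ _ ENNReal.ofReal_ne_top,
      lintegral_gammaPDF_eq_one ha₂ (by linarith : (0:ℝ) < c / 2), mul_one]
  -- value of ∫⁻ F ∘ X
  have hFint : ∫⁻ ω, F (X ω) ∂μ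
      = ENNReal.ofReal (c ^ (-a₁)) * μ {ω | X ω ≤ c * r₁sq} := by
    rw [← lintegral_map hFmeas hX, hXlaw]
    simp only [chiSquareMeasure, gammaMeasure]
    rw [lintegral_withDensity_eq_lintegral_mul volume (gammaPDF_measurable _ _) hFmeas]
    have hpt : ∀ x, (gammaPDF a₁ (1 / 2) * F) x
        = (Iic r₁sq).indicator (fun x => ENNReal.ofReal (c ^ (-a₁)) * gammaPDF a₁ (c / 2) x) x := by
      intro x
      simp only [Pi.mul_apply, hF_def]
      by_cases hx : x ∈ Iic r₁sq
      · rw [indicator_of_mem hx, indicator_of_mem hx, mul_comm, tilt hc a₁ u hu0 hcu x]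
      · rw [indicator_of_notMem hx, indicator_of_notMem hx, mul_zero]
    rw [lintegral_congr hpt, lintegral_indicator measurableSet_Iic,
      lintegral_const_mul' _ _ ENNReal.ofReal_ne_top, Iic_scale hc, hXset (c * r₁sq)]
  -- step 1: Chernoff pointwise bound
  have hA : MeasurableSet {ω | X ω ≤ r₁sq ∧ r₂sq < X ω + Y ω} := by
    exact (measurableSet_le hX measurable_const).inter
      (measurableSet_lt measurable_const (hX.add hY))
  have step1 : μ {ω | X ω ≤ r₁sq ∧ r₂sq < X ω + Y ω}
      ≤ ENNReal.ofReal (Real.exp (-(u * r₂sq))) * ∫⁻ ω, F (X ω) * H (Y ω) ∂μ := by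
    rw [← lintegral_indicator_one hA, ← lintegral_const_mul' _ _ ENNReal.ofReal_ne_top]
    refine lintegral_mono fun ω => ?_
    by_cases hω : ω ∈ {ω | X ω ≤ r₁sq ∧ r₂sq < X ω + Y ω}
    · rw [indicator_of_mem hω]
      obtain ⟨h1, h2⟩ := hω
      simp only [hF_def, hH_def, Pi.one_apply]
      rw [indicator_of_mem (by exact h1)]
      rw [← ENNReal.ofReal_mul (Real.exp_nonneg _), ← ENNReal.ofReal_mul (Real.exp_nonneg _),
        ← Real.exp_add, ← Real.exp_add]
      rw [ENNReal.one_le_ofReal]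
      refine Real.one_le_exp ?_
      nlinarith [mul_le_mul_of_nonneg_left h2.le hu0]
    · rw [indicator_of_notMem hω]
      exact zero_le
  -- step 2: independence
  have step2 : ∫⁻ ω, F (X ω) * H (Y ω) ∂μ
      = (∫⁻ ω, F (X ω) ∂μ) * ∫⁻ ω, H (Y ω) ∂μ :=
    lintegral_mul_eq_lintegral_mul_lintegral_of_indepFun
      (hFmeas.comp hX) (hHmeas.comp hY) (hXY.comp hFmeas hHmeas)
  -- combine in ENNReal
  have hcombine : μ {ω | X ω ≤ r₁sq ∧ r₂sq < X ω + Y ω}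
      ≤ ENNReal.ofReal (Real.exp (-(u * r₂sq)))
          * ENNReal.ofReal (c ^ (-((I₁ + I₂ : ℝ)) / 2)) * μ {ω | X ω ≤ c * r₁sq} := by
    refine step1.trans ?_
    rw [step2, hHint, hFint]
    have hexp : c ^ (-a₁) * c ^ (-a₂) = c ^ (-((I₁ + I₂ : ℝ)) / 2) := by
      rw [← Real.rpow_add hc]
      congr 1
      simp only [ha₁_def, ha₂_def]
      push_cast
      ring
    rw [show ENNReal.ofReal (c ^ (-((I₁ + I₂ : ℝ)) / 2))
        = ENNReal.ofReal (c ^ (-a₁)) * ENNReal.ofReal (c ^ (-a₂)) by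
      rw [← ENNReal.ofReal_mul (Real.rpow_nonneg hc.le _), hexp]]
    ring_nf
    exact le_refl _
  -- conclude with toReal
  have hfin : ENNReal.ofReal (Real.exp (-(u * r₂sq)))
      * ENNReal.ofReal (c ^ (-((I₁ + I₂ : ℝ)) / 2)) * μ {ω | X ω ≤ c * r₁sq} ≠ ⊤ :=
    ENNReal.mul_ne_top (ENNReal.mul_ne_top ENNReal.ofReal_ne_top ENNReal.ofReal_ne_top)
      (measure_ne_top μ _)
  have := ENNReal.toReal_mono hfin hcombine
  rw [ENNReal.toReal_mul, ENNReal.toReal_mul, ENNReal.toReal_ofReal (Real.exp_nonneg _),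
    ENNReal.toReal_ofReal (Real.rpow_nonneg hc.le _)] at this
  exact this
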